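/- (Mui's theorem on Borel invariants) The elements h_1, …, h_n are algebraically independent over 𝔽_p, and the subalgebra of B_n-invariants of S = MvPolynomial (Fin n) 𝔽_p equals the 𝔽_p-subalgebra generated by h_1, …, h_n; in other words, S^{B_n} = 𝔽_p[h_1, …, h_n] is a polynomial algebra. -/

import Mathlib

open MvPolynomial

/-- `V p n k` : the set of `𝔽_p`-linear combinations of the first `k` variables. -/
noncomputable def V (p n k : ℕ) [Fact p.Prime] : Finset (MvPolynomial (Fin n) (ZMod p)) :=
  (Finset.univ : Finset (Fin n → ZMod p)).image
    (fun c => ∑ j ∈ Finset.univ.filter (fun j : Fin n => j.val < k), C (c j) * X j)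

/-- `f p n k = ∏_{u ∈ V_k} (X - C u)`. -/
noncomputable def f (p n k : ℕ) [Fact p.Prime] :
    Polynomial (MvPolynomial (Fin n) (ZMod p)) :=
  ∏ u ∈ V p n k, (Polynomial.X - Polynomial.C u)

/-- Dickson invariant `d_{k,i}`. -/
noncomputable def d (p n k i : ℕ) [Fact p.Prime] : MvPolynomial (Fin n) (ZMod p) :=
  (-1) ^ (k - i) * (f p n k).coeff (p ^ i)

/-- Borel generator: `hGen p n j` is `h_{j+1}` of the paper. -/
noncomputable def hGen (p n : ℕ) [Fact p.Prime] (j : Fin n) : MvPolynomial (Fin n) (ZMod p) :=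
  (Polynomial.eval (X j) (f p n j.val)) ^ (p - 1)

/-- Action of `GL_n(𝔽_p)` on `S` by linear substitution `g · y_j = ∑_i g_{ij} y_i`. -/
noncomputable def gact (p n : ℕ) [Fact p.Prime] (g : GL (Fin n) (ZMod p)) :
    MvPolynomial (Fin n) (ZMod p) →ₐ[ZMod p] MvPolynomial (Fin n) (ZMod p) :=
  aeval (fun j : Fin n => ∑ i : Fin n, C ((g : Matrix (Fin n) (Fin n) (ZMod p)) i j) * X i)

namespace Mui

variable (p n : ℕ) [Fact p.Prime]

local notation "K" => ZMod p
local notation "S" => MvPolynomial (Fin n) (ZMod p)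

/-- upper triangular -/
def UT (g : GL (Fin n) K) : Prop :=
  ∀ i j : Fin n, j < i → (g : Matrix (Fin n) (Fin n) K) i j = 0

variable {p n}

lemma mem_V {k : ℕ} {u : S} :
    u ∈ V p n k ↔ ∃ c : Fin n → K,
      u = ∑ j ∈ Finset.univ.filter (fun j : Fin n => j.val < k), C (c j) * X j := by
  simp [V, eq_comm]

lemma V_zero_mem {k : ℕ} : (0 : S) ∈ V p n k :=
  mem_V.mpr ⟨0, by simp⟩

lemma V_combo_mem {k : ℕ} {u v : S} (hu : u ∈ V p n k) (hv : v ∈ V p n k) (a b : K) :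
    C a * u + C b * v ∈ V p n k := by
  rw [mem_V] at hu hv ⊢
  obtain ⟨c, rfl⟩ := hu
  obtain ⟨c', rfl⟩ := hv
  refine ⟨fun j => a * c j + b * c' j, ?_⟩
  rw [Finset.mul_sum, Finset.mul_sum, ← Finset.sum_add_distrib]
  refine Finset.sum_congr rfl fun j _ => ?_
  rw [map_add, map_mul, map_mul]
  ring

lemma V_smul_mem {k : ℕ} {u : S} (hu : u ∈ V p n k) (a : K) : C a * u ∈ V p n k := by
  have := V_combo_mem hu V_zero_mem a 0
  simpa using this

lemma V_add_mem {k : ℕ} {u v : S} (hu : u ∈ V p n k) (hv : v ∈ V p n k) :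
    u + v ∈ V p n k := by
  have := V_combo_mem hu hv 1 1
  simpa using this

lemma V_supported {k : ℕ} {u : S} (hu : u ∈ V p n k) :
    u ∈ supported K {j : Fin n | j.val < k} := by
  rw [mem_V] at hu
  obtain ⟨c, rfl⟩ := hu
  refine Subalgebra.sum_mem _ fun j hj => ?_
  simp only [Finset.mem_filter] at hj
  exact Subalgebra.mul_mem _ (by
    rw [← MvPolynomial.algebraMap_eq]; exact Subalgebra.algebraMap_mem _ _)
    (X_mem_supported.mpr hj.2)

lemma gact_apply_X (g : GL (Fin n) K) (j : Fin n) :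
    gact p n g (X j) = ∑ i : Fin n, C ((g : Matrix (Fin n) (Fin n) K) i j) * X i :=
  aeval_X _ j

lemma gact_C (g : GL (Fin n) K) (a : K) : gact p n g (C a) = C a := by
  rw [← MvPolynomial.algebraMap_eq]; exact AlgHom.commutes _ a

lemma gact_gact (g g' : GL (Fin n) K) (x : S) :
    gact p n g (gact p n g' x) = gact p n (g * g') x := by
  have : (gact p n g).comp (gact p n g') = gact p n (g * g') := by
    apply MvPolynomial.algHom_ext
    intro j
    rw [AlgHom.comp_apply, gact_apply_X, gact_apply_X, map_sum]
    have : ∀ i : Fin n, gact p n g (C ((g' : Matrix (Fin n) (Fin n) K) i j) * X i)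
        = ∑ l : Fin n, (C ((g : Matrix (Fin n) (Fin n) K) l i)
            * C ((g' : Matrix (Fin n) (Fin n) K) i j)) * X l := by
      intro i
      rw [map_mul, gact_C, gact_apply_X, Finset.mul_sum]
      exact Finset.sum_congr rfl fun l _ => by ring
    rw [Finset.sum_congr rfl fun i _ => this i, Finset.sum_comm]
    refine Finset.sum_congr rfl fun l _ => ?_
    rw [← Finset.sum_mul]
    congr 1
    rw [Units.val_mul, Matrix.mul_apply, map_sum]
    exact Finset.sum_congr rfl fun i _ => (map_mul _ _ _).symm
  exact AlgHom.congr_fun this x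

lemma gact_one (x : S) : gact p n 1 x = x := by
  have : gact p n 1 = AlgHom.id K S := by
    apply MvPolynomial.algHom_ext
    intro j
    rw [gact_apply_X]
    simp [Matrix.one_apply, apply_ite C, ite_mul, Finset.sum_ite_eq]
  rw [this]; rfl

lemma gact_injective (g : GL (Fin n) K) : Function.Injective (gact p n g) := by
  intro a b h
  have := congrArg (gact p n g⁻¹) h
  rwa [gact_gact, gact_gact, inv_mul_cancel, gact_one, gact_one] at this

lemma gact_X_mem_V {g : GL (Fin n) K} (hg : UT p n g) {k : ℕ} {j : Fin n} (hj : j.val < k) :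
    gact p n g (X j) ∈ V p n k := by
  rw [gact_apply_X, mem_V]
  refine ⟨fun i => (g : Matrix (Fin n) (Fin n) K) i j, ?_⟩
  symm
  apply Finset.sum_subset (Finset.filter_subset _ _)
  intro i _ hi
  simp only [Finset.mem_filter, Finset.mem_univ, true_and, not_lt] at hi
  have hji : j < i := by rw [Fin.lt_def]; omega
  show C ((g : Matrix (Fin n) (Fin n) K) i j) * X i = 0
  rw [hg i j hji, map_zero, zero_mul]

lemma gact_mem_V {g : GL (Fin n) K} (hg : UT p n g) {k : ℕ} {u : S} (hu : u ∈ V p n k) :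
    gact p n g u ∈ V p n k := by
  rw [mem_V] at hu
  obtain ⟨c, rfl⟩ := hu
  rw [map_sum]
  refine Finset.sum_induction _ (fun y => y ∈ V p n k) (fun a b ha hb => V_add_mem ha hb)
    V_zero_mem fun j hj => ?_
  simp only [Finset.mem_filter, Finset.mem_univ, true_and] at hj
  rw [map_mul, gact_C]
  exact V_smul_mem (gact_X_mem_V hg hj) _

lemma gact_image_V {g : GL (Fin n) K} (hg : UT p n g) (k : ℕ) :
    (V p n k).image (gact p n g) = V p n k := by
  apply Finset.eq_of_subset_of_card_le
  · intro x hx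
    rw [Finset.mem_image] at hx
    obtain ⟨u, hu, rfl⟩ := hx
    exact gact_mem_V hg hu
  · rw [Finset.card_image_of_injective _ (gact_injective g)]

lemma affine_injective {a : K} (ha : a ≠ 0) (w : S) :
    Function.Injective (fun u : S => C a * u + w) := by
  intro u u' h
  simp only [add_left_inj] at h
  have hca : (C a : S) ≠ 0 := by simpa using ha
  exact mul_left_cancel₀ hca h

lemma affine_image_V {k : ℕ} {a : K} (ha : a ≠ 0) {v : S} (hv : v ∈ V p n k) (b : K) :
    (V p n k).image (fun u => C a * u + C b * v) = V p n k := by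
  apply Finset.eq_of_subset_of_card_le
  · intro x hx
    rw [Finset.mem_image] at hx
    obtain ⟨u, hu, rfl⟩ := hx
    exact V_combo_mem hu hv a b
  · rw [Finset.card_image_of_injective _ (affine_injective ha (C b * v))]

lemma card_V {k : ℕ} (hk : k ≤ n) : (V p n k).card = p ^ k := by
  classical
  set s₂ : ({j : Fin n // j.val < k} → K) → S :=
    fun d => ∑ j : {j : Fin n // j.val < k}, C (d j) * X j.val with hs₂
  have hrepr : ∀ c : Fin n → K,
      (∑ j ∈ Finset.univ.filter (fun j : Fin n => j.val < k), C (c j) * X j)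
        = s₂ (fun j => c j.val) := by
    intro c
    exact Finset.sum_subtype (Finset.univ.filter (fun j : Fin n => j.val < k))
      (fun x => by simp) (fun j => C (c j) * X j)
  have hV : V p n k = Finset.univ.image s₂ := by
    ext x
    simp only [V, Finset.mem_image, Finset.mem_univ, true_and]
    constructor
    · rintro ⟨c, rfl⟩; exact ⟨fun j => c j.val, (hrepr c).symm⟩
    · rintro ⟨d, rfl⟩
      refine ⟨fun j => if h : j.val < k then d ⟨j, h⟩ else 0, ?_⟩
      rw [hrepr]
      congr 1
      funext j
      rw [dif_pos j.prop]
  have hinj : Function.Injective s₂ := by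
    intro d d' h
    funext j₀
    have := congrArg (coeff (Finsupp.single j₀.val 1)) h
    rw [hs₂] at this
    simp only [coeff_sum, coeff_C_mul, coeff_X'] at this
    have key : ∀ d : {j : Fin n // j.val < k} → K,
        (∑ j : {j : Fin n // j.val < k},
          d j * if Finsupp.single (j : Fin n) 1 = Finsupp.single (j₀ : Fin n) 1 then 1 else 0)
          = d j₀ := by
      intro d
      rw [Finset.sum_congr rfl (fun j _ => ?_), Finset.sum_ite_eq' Finset.univ j₀ d]
      · simp
      · have hcond : (Finsupp.single (j : Fin n) 1 = Finsupp.single (j₀ : Fin n) 1) = (j = j₀) := by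
          apply propext
          rw [Finsupp.single_left_inj (one_ne_zero)]
          exact ⟨fun hh => Subtype.ext hh, fun hh => congrArg _ hh⟩
        simp only [hcond]
        split_ifs <;> simp
    rw [key, key] at this
    exact this
  rw [hV, Finset.card_image_of_injective _ hinj, Finset.card_univ, Fintype.card_fun]
  have : Fintype.card {j : Fin n // j.val < k} = k := by
    have e : Fin k ≃ {j : Fin n // j.val < k} :=
      { toFun := fun i => ⟨Fin.castLE hk i, by simp⟩
        invFun := fun j => ⟨j.val.val, j.prop⟩
        left_inv := fun i => by ext; simp
        right_inv := fun j => by ext; simp }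
    rw [← Fintype.card_congr e, Fintype.card_fin]
  rw [this, ZMod.card]

lemma f_monic (k : ℕ) : (f p n k : Polynomial S).Monic :=
  Polynomial.monic_prod_of_monic _ _ fun u _ => Polynomial.monic_X_sub_C u

lemma f_natDegree (k : ℕ) : (f p n k : Polynomial S).natDegree = (V p n k).card := by
  rw [f, Polynomial.natDegree_prod _ _ (fun u _ => Polynomial.X_sub_C_ne_zero u)]
  simp [Polynomial.natDegree_X_sub_C]

lemma eval_f (k : ℕ) (t : S) :
    Polynomial.eval t (f p n k) = ∏ u ∈ V p n k, (t - u) := by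
  rw [f, Polynomial.eval_prod]
  simp

lemma UT_diag_ne_zero {g : GL (Fin n) K} (hg : UT p n g) (j : Fin n) :
    (g : Matrix (Fin n) (Fin n) K) j j ≠ 0 := by
  intro h0
  have hdet : IsUnit (g : Matrix (Fin n) (Fin n) K).det :=
    (Matrix.isUnit_iff_isUnit_det _).mp (Units.isUnit g)
  rw [Matrix.det_of_upperTriangular (fun i j hij => hg i j hij)] at hdet
  have : (∏ i : Fin n, (g : Matrix (Fin n) (Fin n) K) i i) = 0 :=
    Finset.prod_eq_zero (Finset.mem_univ j) h0
  rw [this] at hdet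
  exact hdet.ne_zero rfl

lemma gact_X_split {g : GL (Fin n) K} (hg : UT p n g) (j : Fin n) :
    ∃ w ∈ V p n j.val,
      gact p n g (X j) = C ((g : Matrix (Fin n) (Fin n) K) j j) * X j + w := by
  refine ⟨∑ i ∈ Finset.univ.filter (fun i : Fin n => i.val < j.val),
      C ((g : Matrix (Fin n) (Fin n) K) i j) * X i, mem_V.mpr ⟨_, rfl⟩, ?_⟩
  rw [gact_apply_X]
  rw [← Finset.sum_filter_add_sum_filter_not Finset.univ (fun i : Fin n => i.val < j.val)]
  rw [add_comm]
  congr 1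
  rw [Finset.sum_eq_single j]
  · intro i hi hij
    simp only [Finset.mem_filter, Finset.mem_univ, true_and, not_lt] at hi
    have : j < i := by
      rw [Fin.lt_def]
      rcases lt_or_eq_of_le hi with h | h
      · exact h
      · exact absurd (Fin.ext h.symm) hij
    rw [hg i j this, map_zero, zero_mul]
  · intro hj
    simp at hj

lemma gact_eval_f {g : GL (Fin n) K} (hg : UT p n g) {k : ℕ} {j : Fin n} (hjk : j.val = k) :
    gact p n g (Polynomial.eval (X j) (f p n k))
      = (C ((g : Matrix (Fin n) (Fin n) K) j j)) ^ (V p n k).card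
          * Polynomial.eval (X j) (f p n k) := by
  subst hjk
  obtain ⟨w, hw, hsplit⟩ := gact_X_split hg j
  set a := (g : Matrix (Fin n) (Fin n) K) j j with ha
  have ha0 : a ≠ 0 := UT_diag_ne_zero hg j
  rw [eval_f, map_prod]
  have step1 : ∀ u ∈ V p n j.val,
      gact p n g (X j - u) = (C a * X j + w) - gact p n g u := by
    intro u hu
    rw [map_sub, hsplit]
  rw [Finset.prod_congr rfl step1]
  have step2 : ∏ u ∈ V p n j.val, ((C a * X j + w) - gact p n g u)
      = ∏ u ∈ V p n j.val, ((C a * X j + w) - u) := by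
    conv_rhs => rw [← gact_image_V hg j.val]
    rw [Finset.prod_image (fun x _ y _ h => gact_injective g h)]
  rw [step2]
  have step3 : ∏ u ∈ V p n j.val, ((C a * X j + w) - u)
      = ∏ u ∈ V p n j.val, ((C a * X j + w) - (C a * u + C 1 * w)) := by
    conv_lhs => rw [← affine_image_V ha0 hw (1 : K)]
    rw [Finset.prod_image (fun x _ y _ h => affine_injective ha0 _ h)]
  rw [step3]
  have step4 : ∀ u ∈ V p n j.val,
      (C a * X j + w) - (C a * u + C 1 * w) = C a * (X j - u) := by
    intro u hu
    rw [map_one, one_mul, mul_sub]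
    ring
  rw [Finset.prod_congr rfl step4, Finset.prod_mul_distrib, Finset.prod_const]

lemma gact_hGen {g : GL (Fin n) K} (hg : UT p n g) (j : Fin n) :
    gact p n g (hGen p n j) = hGen p n j := by
  rw [hGen, map_pow, gact_eval_f hg rfl, mul_pow, ← pow_mul,
    mul_comm ((V p n j.val).card) (p - 1), pow_mul, ← map_pow,
    ZMod.pow_card_sub_one_eq_one (UT_diag_ne_zero hg j), map_one, one_pow, one_mul]

variable (p n)

/-- isolate variable `κ` -/
noncomputable def Tk (κ : Fin n) : MvPolynomial (Fin n) K →ₐ[K] Polynomial S :=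
  aeval (fun j : Fin n => if j = κ then Polynomial.X else Polynomial.C (X j))

variable {p n}

lemma Tk_X_self (κ : Fin n) : Tk p n κ (X κ) = Polynomial.X := by
  rw [Tk, aeval_X, if_pos rfl]

lemma Tk_X_ne {κ j : Fin n} (hj : j ≠ κ) : Tk p n κ (X j) = Polynomial.C (X j) := by
  rw [Tk, aeval_X, if_neg hj]

lemma back_Tk (κ : Fin n) (x : S) : Polynomial.aeval (X κ : S) (Tk p n κ x) = x := by
  have : (((Polynomial.aeval (X κ : S)).restrictScalars K).comp (Tk p n κ))
      = AlgHom.id K (MvPolynomial (Fin n) K) := by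
    apply MvPolynomial.algHom_ext
    intro j
    by_cases hj : j = κ
    · subst hj
      simp [Tk_X_self]
    · simp [Tk_X_ne hj]
  exact AlgHom.congr_fun this x

lemma Tk_injective (κ : Fin n) : Function.Injective (Tk p n κ) := by
  intro a b h
  have := congrArg (Polynomial.aeval (X κ : S)) h
  rwa [back_Tk, back_Tk] at this

lemma Tk_supported {κ : Fin n} {s : Set (Fin n)} (hs : κ ∉ s) {x : S}
    (hx : x ∈ supported K s) : Tk p n κ x = Polynomial.C x := by
  refine Algebra.adjoin_induction (fun y hy => ?_) (fun r => ?_)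
    (fun a b _ _ ha hb => ?_) (fun a b _ _ ha hb => ?_) hx
  · obtain ⟨j, hj, rfl⟩ := hy
    exact Tk_X_ne (fun hc => hs (hc ▸ hj))
  · rw [AlgHom.commutes]
    rw [MvPolynomial.algebraMap_eq, Polynomial.algebraMap_apply]
    rfl
  · rw [map_add, ha, hb, map_add]
  · rw [map_mul, ha, hb, map_mul]

lemma Tk_coeff_mem {k : ℕ} (hk : k < n) {x : S}
    (hx : x ∈ supported K {j : Fin n | j.val < k + 1}) (i : ℕ) :
    (Tk p n ⟨k, hk⟩ x).coeff i ∈ supported K {j : Fin n | j.val < k} := by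
  revert i
  refine Algebra.adjoin_induction (fun y hy => ?_) (fun r i => ?_)
    (fun a b _ _ ha hb i => ?_) (fun a b _ _ ha hb i => ?_) hx
  · obtain ⟨j, hj, rfl⟩ := hy
    intro i
    by_cases hjk : j = ⟨k, hk⟩
    · subst hjk
      rw [Tk_X_self]
      rw [Polynomial.coeff_X]
      split_ifs
      · exact Subalgebra.one_mem _
      · exact Subalgebra.zero_mem _
    · rw [Tk_X_ne hjk]
      rw [Polynomial.coeff_C]
      split_ifs
      · refine X_mem_supported.mpr ?_
        have : j.val ≠ k := fun hc => hjk (Fin.ext hc)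
        have : j.val < k + 1 := hj
        simp only [Set.mem_setOf_eq]
        omega
      · exact Subalgebra.zero_mem _
  · rw [AlgHom.commutes, Polynomial.algebraMap_apply, Polynomial.coeff_C]
    split_ifs
    · exact Subalgebra.algebraMap_mem _ _
    · exact Subalgebra.zero_mem _
  · rw [map_add, Polynomial.coeff_add]
    exact Subalgebra.add_mem _ (ha i) (hb i)
  · rw [map_mul, Polynomial.coeff_mul]
    exact Subalgebra.sum_mem _ fun q _ => Subalgebra.mul_mem _ (ha q.1) (hb q.2)

lemma Tk_V {κ : Fin n} {u : S} (hu : u ∈ V p n κ.val) : Tk p n κ u = Polynomial.C u :=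
  Tk_supported (by simp) (V_supported hu)

lemma Tk_e (κ : Fin n) :
    Tk p n κ (Polynomial.eval (X κ) (f p n κ.val)) = f p n κ.val := by
  rw [eval_f, map_prod, f]
  refine Finset.prod_congr rfl fun u hu => ?_
  rw [map_sub, Tk_X_self, Tk_V hu]

lemma Tk_hGen_self (κ : Fin n) :
    Tk p n κ (hGen p n κ) = (f p n κ.val) ^ (p - 1) := by
  rw [hGen, map_pow, Tk_e]

variable (p n)

/-- the matrix which is the identity except in column `κ`, where it has `lam` on the diagonal
and `c i` above. -/
noncomputable def tmat (κ : Fin n) (lam : K) (c : Fin n → K) : Matrix (Fin n) (Fin n) K :=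
  Matrix.of fun i j =>
    if j = κ then (if i = κ then lam else if i.val < κ.val then c i else 0)
    else (if i = j then 1 else 0)

variable {p n}

lemma tmat_det (κ : Fin n) (lam : K) (c : Fin n → K) : (tmat p n κ lam c).det = lam := by
  rw [Matrix.det_of_upperTriangular (M := tmat p n κ lam c) ?ut]
  case ut =>
    intro i j hij
    show (if j = κ then _ else _) = 0
    split_ifs <;>
      first
        | rfl
        | (exfalso; simp only [Fin.lt_def, Fin.ext_iff, id_eq] at *; omega)
  have hdiag : ∀ i : Fin n, tmat p n κ lam c i i = if i = κ then lam else 1 := by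
    intro i
    show (if i = κ then _ else _) = _
    split_ifs <;> simp_all
  rw [Finset.prod_congr rfl fun i _ => hdiag i, Finset.prod_ite_eq' Finset.univ κ fun _ => lam,
    if_pos (Finset.mem_univ κ)]

noncomputable def tunit (κ : Fin n) (lam : K) (c : Fin n → K) (hl : lam ≠ 0) : GL (Fin n) K :=
  Matrix.nonsingInvUnit (tmat p n κ lam c)
    (by rw [tmat_det]; exact isUnit_iff_ne_zero.mpr hl)

lemma tunit_coe (κ : Fin n) (lam : K) (c : Fin n → K) (hl : lam ≠ 0) :
    ((tunit κ lam c hl : GL (Fin n) K) : Matrix (Fin n) (Fin n) K) = tmat p n κ lam c := rfl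

lemma tunit_UT (κ : Fin n) (lam : K) (c : Fin n → K) (hl : lam ≠ 0) :
    UT p n (tunit κ lam c hl) := by
  intro i j hij
  rw [tunit_coe]
  show (if j = κ then _ else _) = 0
  split_ifs <;>
    first
      | rfl
      | (exfalso; simp only [Fin.lt_def, Fin.ext_iff, id_eq] at *; omega)

lemma gact_tunit_X_ne (κ : Fin n) (lam : K) (c : Fin n → K) (hl : lam ≠ 0) {j : Fin n}
    (hj : j ≠ κ) : gact p n (tunit κ lam c hl) (X j) = X j := by
  rw [gact_apply_X]
  have : ∀ i : Fin n, ((tunit κ lam c hl : GL (Fin n) K) : Matrix (Fin n) (Fin n) K) i j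
      = if i = j then 1 else 0 := by
    intro i
    rw [tunit_coe]
    show (if j = κ then _ else _) = _
    rw [if_neg hj]
  rw [Finset.sum_congr rfl fun i _ => by rw [this i]]
  simp [apply_ite C, ite_mul, Finset.sum_ite_eq]

lemma gact_tunit_X_self (κ : Fin n) (lam : K) (c : Fin n → K) (hl : lam ≠ 0) :
    gact p n (tunit κ lam c hl) (X κ)
      = C lam * X κ
        + ∑ i ∈ Finset.univ.filter (fun i : Fin n => i.val < κ.val), C (c i) * X i := by
  rw [gact_apply_X]
  rw [← Finset.sum_filter_add_sum_filter_not Finset.univ (fun i : Fin n => i.val < κ.val)]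
  rw [add_comm]
  congr 1
  · rw [Finset.sum_eq_single κ]
    · rw [tunit_coe]
      show C (if κ = κ then (if κ = κ then lam else _) else _) * X κ = C lam * X κ
      rw [if_pos rfl, if_pos rfl]
    · intro i hi hik
      simp only [Finset.mem_filter, Finset.mem_univ, true_and, not_lt] at hi
      rw [tunit_coe]
      show C (if κ = κ then (if i = κ then lam else if i.val < κ.val then c i else 0) else _)
          * X i = 0
      rw [if_pos rfl, if_neg hik, if_neg (not_lt.mpr hi), map_zero, zero_mul]
    · intro h
      simp at h
  · refine Finset.sum_congr rfl fun i hi => ?_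
    simp only [Finset.mem_filter, Finset.mem_univ, true_and] at hi
    rw [tunit_coe]
    have hik : i ≠ κ := fun hc => absurd (hc ▸ hi) (lt_irrefl _)
    show C (if κ = κ then (if i = κ then lam else if i.val < κ.val then c i else 0) else _)
        * X i = C (c i) * X i
    rw [if_pos rfl, if_neg hik, if_pos hi]

lemma w_mem_V (κ : Fin n) (c : Fin n → K) :
    (∑ i ∈ Finset.univ.filter (fun i : Fin n => i.val < κ.val), C (c i) * X i) ∈ V p n κ.val :=
  mem_V.mpr ⟨c, rfl⟩

lemma Tk_C (κ : Fin n) (a : K) : Tk p n κ (C a) = Polynomial.C (C a) := by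
  rw [← MvPolynomial.algebraMap_eq, AlgHom.commutes, Polynomial.algebraMap_apply]

lemma Tk_gact_tunit (κ : Fin n) (lam : K) (c : Fin n → K) (hl : lam ≠ 0) (x : S) :
    Tk p n κ (gact p n (tunit κ lam c hl) x)
      = (Tk p n κ x).comp
          (Polynomial.C (C lam) * Polynomial.X
            + Polynomial.C (∑ i ∈ Finset.univ.filter (fun i : Fin n => i.val < κ.val),
                C (c i) * X i)) := by
  have H : (Tk p n κ).comp (gact p n (tunit κ lam c hl))
      = ((Polynomial.aeval
            (Polynomial.C (C lam) * Polynomial.X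
              + Polynomial.C (∑ i ∈ Finset.univ.filter (fun i : Fin n => i.val < κ.val),
                  C (c i) * X i))).restrictScalars K).comp (Tk p n κ) := by
    apply MvPolynomial.algHom_ext
    intro j
    rw [AlgHom.comp_apply, AlgHom.comp_apply, AlgHom.coe_restrictScalars']
    by_cases hj : j = κ
    · subst hj
      rw [gact_tunit_X_self, Tk_X_self, map_add, map_mul, Tk_C, Tk_X_self,
        Tk_supported (by simp) (V_supported (w_mem_V j c)), ← Polynomial.comp_eq_aeval,
        Polynomial.X_comp]
    · rw [gact_tunit_X_ne _ _ _ _ hj, Tk_X_ne hj, ← Polynomial.comp_eq_aeval,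
        Polynomial.C_comp]
  have := AlgHom.congr_fun H x
  rw [AlgHom.comp_apply, AlgHom.comp_apply, AlgHom.coe_restrictScalars',
    ← Polynomial.comp_eq_aeval] at this
  exact this

lemma card_V_pos (k : ℕ) : 0 < (V p n k).card :=
  Finset.card_pos.mpr ⟨0, V_zero_mem⟩

/-- comp with a fixed positive-degree polynomial is injective (domain). -/
lemma comp_right_injective {R : Type*} [CommRing R] [IsDomain R] {F : Polynomial R}
    (hF : 0 < F.natDegree) : Function.Injective (fun q : Polynomial R => q.comp F) := by
  intro a b h
  by_contra hne
  have hab : a - b ≠ 0 := sub_ne_zero.mpr hne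
  have hcomp : (a - b).comp F = 0 := by
    rw [Polynomial.sub_comp]
    simpa using congrArg (fun t => t - b.comp F) h
  have hlead := Polynomial.leadingCoeff_comp (p := a - b) (q := F) hF.ne'
  rw [hcomp, Polynomial.leadingCoeff_zero] at hlead
  have hF0 : F.leadingCoeff ≠ 0 :=
    Polynomial.leadingCoeff_ne_zero.mpr (fun h0 => by simp [h0] at hF)
  have : (a - b).leadingCoeff ≠ 0 := Polynomial.leadingCoeff_ne_zero.mpr hab
  exact (mul_ne_zero this (pow_ne_zero _ hF0)) hlead.symm

lemma comp_C_mul_X_coeff {R : Type*} [CommRing R] (G : Polynomial R) (c : R) (i : ℕ) :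
    (G.comp (Polynomial.C c * Polynomial.X)).coeff i = c ^ i * G.coeff i := by
  have hrw : G.comp (Polynomial.C c * Polynomial.X)
      = ∑ j ∈ Finset.range (G.natDegree + 1),
          Polynomial.monomial j (G.coeff j * c ^ j) := by
    rw [Polynomial.comp, Polynomial.eval₂_eq_sum_range]
    refine Finset.sum_congr rfl fun j _ => ?_
    rw [mul_pow, ← Polynomial.C_pow, ← mul_assoc, ← Polynomial.C_mul,
      Polynomial.C_mul_X_pow_eq_monomial]
  rw [hrw, Polynomial.finset_sum_coeff]
  simp only [Polynomial.coeff_monomial]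
  rw [Finset.sum_ite_eq' (Finset.range (G.natDegree + 1)) i (fun j => G.coeff j * c ^ j)]
  split_ifs with h
  · ring
  · rw [Finset.mem_range, not_lt] at h
    rw [Polynomial.coeff_eq_zero_of_natDegree_lt (by omega), mul_zero]

lemma f_dvd_of_roots {k : ℕ} {q : Polynomial S} (h : ∀ v ∈ V p n k, q.eval v = 0) :
    f p n k ∣ q := by
  rcases eq_or_ne q 0 with rfl | hq
  · exact dvd_zero _
  have hle : (V p n k).val ≤ q.roots := by
    rw [Multiset.le_iff_count]
    intro a
    by_cases ha : a ∈ V p n k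
    · rw [Multiset.count_eq_one_of_mem (V p n k).nodup ha, Polynomial.count_roots]
      exact (Polynomial.rootMultiplicity_pos hq).mpr (h a ha)
    · rw [Multiset.count_eq_zero_of_notMem (by simpa using ha)]
      exact Nat.zero_le _
  have : f p n k = ((V p n k).val.map fun u => Polynomial.X - Polynomial.C u).prod := by
    rw [f, Finset.prod_eq_multiset_prod]
  rw [this]
  exact (Multiset.prod_dvd_prod_of_le (Multiset.map_le_map hle)).trans
    (Polynomial.prod_multiset_X_sub_C_dvd q)

lemma f_comp_translate {k : ℕ} {v : S} (hv : v ∈ V p n k) :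
    (f p n k).comp (Polynomial.X + Polynomial.C v) = f p n k := by
  rw [f, Polynomial.prod_comp]
  have step : ∀ u ∈ V p n k,
      (Polynomial.X - Polynomial.C u).comp (Polynomial.X + Polynomial.C v)
        = Polynomial.X - Polynomial.C (C 1 * u + C (-1) * v) := by
    intro u _
    rw [Polynomial.sub_comp, Polynomial.X_comp, Polynomial.C_comp]
    have : (C 1 : S) * u + C (-1) * v = u - v := by
      rw [map_one, one_mul, map_neg, map_one, neg_one_mul]
      ring
    rw [this, map_sub]
    ring
  rw [Finset.prod_congr rfl step]
  conv_rhs => rw [← affine_image_V (one_ne_zero) hv (-1),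
    Finset.prod_image (fun x _ y _ h => affine_injective one_ne_zero _ h)]

lemma pow_p_pow (a : K) (k : ℕ) : a ^ (p ^ k) = a := by
  induction k with
  | zero => simp
  | succ k ih => rw [pow_succ, pow_mul, ih, ZMod.pow_card]

lemma f_comp_scale {k : ℕ} (hk : k ≤ n) {lam : K} (hl : lam ≠ 0) :
    (f p n k).comp (Polynomial.C (C lam) * Polynomial.X)
      = Polynomial.C (C lam) * f p n k := by
  rw [f, Polynomial.prod_comp]
  have step : ∀ u ∈ V p n k,
      (Polynomial.X - Polynomial.C u).comp (Polynomial.C (C lam) * Polynomial.X)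
        = Polynomial.C (C lam) * Polynomial.X - Polynomial.C u := by
    intro u _
    rw [Polynomial.sub_comp, Polynomial.X_comp, Polynomial.C_comp]
  rw [Finset.prod_congr rfl step]
  conv_lhs => rw [← affine_image_V hl V_zero_mem 0,
    Finset.prod_image (fun x _ y _ h => affine_injective hl _ h)]
  have step2 : ∀ u ∈ V p n k,
      Polynomial.C (C lam) * Polynomial.X - Polynomial.C (C lam * u + C 0 * 0)
        = Polynomial.C (C lam) * (Polynomial.X - Polynomial.C u) := by
    intro u _
    rw [map_zero, zero_mul, add_zero, mul_sub, ← Polynomial.C_mul]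
  rw [Finset.prod_congr rfl step2, Finset.prod_mul_distrib, Finset.prod_const]
  congr 1
  rw [← Polynomial.C_pow, ← MvPolynomial.C_pow, card_V hk, pow_p_pow]

lemma f_coeff_mem_abs {k : ℕ} {A : Subalgebra K S} (hA : ∀ u ∈ V p n k, u ∈ A) (i : ℕ) :
    (f p n k).coeff i ∈ A := by
  revert i
  rw [f]
  refine Finset.prod_induction _
    (fun q : Polynomial S => ∀ i, q.coeff i ∈ A)
    (fun a b ha hb i => ?_) (fun i => ?_) (fun u hu i => ?_)
  · rw [Polynomial.coeff_mul]
    exact Subalgebra.sum_mem _ fun q _ => Subalgebra.mul_mem _ (ha q.1) (hb q.2)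
  · rw [Polynomial.coeff_one]
    split_ifs
    · exact Subalgebra.one_mem _
    · exact Subalgebra.zero_mem _
  · rw [Polynomial.coeff_sub, Polynomial.coeff_X, Polynomial.coeff_C]
    match i with
    | 0 => simpa using Subalgebra.neg_mem _ (hA u hu)
    | 1 => simpa using Subalgebra.one_mem _
    | (i+2) => simpa using Subalgebra.zero_mem _

lemma f_coeff_mem (k : ℕ) (i : ℕ) :
    (f p n k).coeff i ∈ supported K {j : Fin n | j.val < k} :=
  f_coeff_mem_abs (fun u hu => V_supported hu) i

lemma translation_eval {k : ℕ} {q : Polynomial S}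
    (hq : ∀ v ∈ V p n k, q.comp (Polynomial.X + Polynomial.C v) = q)
    {v : S} (hv : v ∈ V p n k) : q.eval v = q.eval 0 := by
  have := congrArg (Polynomial.eval (0 : S)) (hq v hv)
  rwa [Polynomial.eval_comp, Polynomial.eval_add, Polynomial.eval_X, Polynomial.eval_C,
    zero_add] at this

lemma translation_expansion {k : ℕ} (d : ℕ) (q : Polynomial S) (hd : q.natDegree < d)
    (hc : ∀ i, q.coeff i ∈ supported K {j : Fin n | j.val < k})
    (hq : ∀ v ∈ V p n k, q.comp (Polynomial.X + Polynomial.C v) = q) :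
    ∃ G : Polynomial S, (∀ i, G.coeff i ∈ supported K {j : Fin n | j.val < k})
      ∧ q = G.comp (f p n k) := by
  induction d using Nat.strong_induction_on generalizing q with
  | _ d ih =>
  have hroots : ∀ v ∈ V p n k, (q - Polynomial.C (q.eval 0)).eval v = 0 := by
    intro v hv
    rw [Polynomial.eval_sub, Polynomial.eval_C, translation_eval hq hv, sub_self]
  have hdvd : f p n k ∣ q - Polynomial.C (q.eval 0) := f_dvd_of_roots hroots
  by_cases hsmall : q.natDegree < (f p n k).natDegree
  · have hlt : (q - Polynomial.C (q.eval 0)).degree < (f p n k).degree := by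
      calc (q - Polynomial.C (q.eval 0)).degree
          ≤ ((q - Polynomial.C (q.eval 0)).natDegree : WithBot ℕ) :=
            Polynomial.degree_le_natDegree
        _ < ((f p n k).natDegree : WithBot ℕ) := by
            rw [Polynomial.natDegree_sub_C]
            exact_mod_cast hsmall
        _ = (f p n k).degree := (Polynomial.degree_eq_natDegree (f_monic k).ne_zero).symm
    have hzero : q - Polynomial.C (q.eval 0) = 0 :=
      Polynomial.eq_zero_of_dvd_of_degree_lt hdvd hlt
    have hqC : q = Polynomial.C (q.eval 0) := by
      have := congrArg (fun t => t + Polynomial.C (q.eval 0)) hzero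
      simpa using this
    refine ⟨Polynomial.C (q.eval 0), fun i => ?_, ?_⟩
    · rw [Polynomial.coeff_C]
      split_ifs
      · rw [← Polynomial.coeff_zero_eq_eval_zero]
        exact hc 0
      · exact Subalgebra.zero_mem _
    · rw [Polynomial.C_comp]
      exact hqC
  · push_neg at hsmall
    have hm : 0 < (f p n k).natDegree := by rw [f_natDegree]; exact card_V_pos k
    set e : S := q.eval 0 with he
    set q₁ : Polynomial S := (q - Polynomial.C e) /ₘ (f p n k) with hq₁def
    have hqq : f p n k * q₁ = q - Polynomial.C e := by
      have hmod : (q - Polynomial.C e) %ₘ (f p n k) = 0 :=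
        (Polynomial.modByMonic_eq_zero_iff_dvd (f_monic k)).mpr hdvd
      have h2 := Polynomial.modByMonic_add_div (q - Polynomial.C e) (f p n k)
      rw [hmod, zero_add] at h2
      exact h2
    have hq₁deg : q₁.natDegree < q.natDegree := by
      rw [hq₁def, Polynomial.natDegree_divByMonic _ (f_monic k), Polynomial.natDegree_sub_C]
      omega
    -- coefficients of q₁ lie in the subalgebra, via lifting
    have hq₁coeff : ∀ i, q₁.coeff i ∈ supported K {j : Fin n | j.val < k} := by
      set ρ : MvPolynomial {j : Fin n // j ∈ {j : Fin n | j.val < k}} K →+* S :=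
        (rename ((↑) : {j : Fin n // j ∈ {j : Fin n | j.val < k}} → Fin n)).toRingHom with hρ
      have hmemrange : ∀ y : S,
          y ∈ supported K {j : Fin n | j.val < k} ↔ y ∈ Set.range ⇑ρ := by
        intro y
        rw [supported_eq_range_rename]
        constructor
        · rintro ⟨x, hx⟩; exact ⟨x, hx⟩
        · rintro ⟨x, hx⟩; exact ⟨x, hx⟩
      have h1 : (q - Polynomial.C e) ∈ Polynomial.lifts ρ := by
        rw [Polynomial.lifts_iff_coeff_lifts]
        intro i
        rw [← hmemrange]
        rw [Polynomial.coeff_sub, Polynomial.coeff_C]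
        refine Subalgebra.sub_mem _ (hc i) ?_
        split_ifs
        · rw [he, ← Polynomial.coeff_zero_eq_eval_zero]; exact hc 0
        · exact Subalgebra.zero_mem _
      have hEl : f p n k ∈ Polynomial.lifts ρ := by
        rw [Polynomial.lifts_iff_coeff_lifts]
        intro i
        rw [← hmemrange]
        exact f_coeff_mem k i
      obtain ⟨Q', hQ'⟩ := (Polynomial.mem_lifts _).mp h1
      obtain ⟨E', hE', _, hE'monic⟩ :=
        Polynomial.lifts_and_degree_eq_and_monic hEl (f_monic k)
      have hmapped : q₁ = Polynomial.map ρ (Q' /ₘ E') := by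
        rw [Polynomial.map_divByMonic ρ hE'monic, hQ', hE', hq₁def]
      intro i
      rw [hmapped, Polynomial.coeff_map, hmemrange]
      exact ⟨_, rfl⟩
    have hq₁inv : ∀ v ∈ V p n k, q₁.comp (Polynomial.X + Polynomial.C v) = q₁ := by
      intro v hv
      have hcancel : f p n k * (q₁.comp (Polynomial.X + Polynomial.C v)) = f p n k * q₁ := by
        calc f p n k * (q₁.comp (Polynomial.X + Polynomial.C v))
            = (f p n k).comp (Polynomial.X + Polynomial.C v)
                * (q₁.comp (Polynomial.X + Polynomial.C v)) := by rw [f_comp_translate hv]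
          _ = (f p n k * q₁).comp (Polynomial.X + Polynomial.C v) := by
              rw [Polynomial.mul_comp]
          _ = (q - Polynomial.C e).comp (Polynomial.X + Polynomial.C v) := by rw [hqq]
          _ = q - Polynomial.C e := by
              rw [Polynomial.sub_comp, Polynomial.C_comp, hq v hv]
          _ = f p n k * q₁ := hqq.symm
      exact mul_left_cancel₀ (f_monic k).ne_zero hcancel
    obtain ⟨G₁, hG₁coeff, hG₁⟩ := ih q.natDegree hd q₁ hq₁deg hq₁coeff hq₁inv
    refine ⟨Polynomial.C e + Polynomial.X * G₁, fun i => ?_, ?_⟩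
    · rw [Polynomial.coeff_add, Polynomial.coeff_C]
      cases i with
      | zero =>
          rw [Polynomial.mul_coeff_zero, Polynomial.coeff_X_zero, zero_mul]
          refine Subalgebra.add_mem _ ?_ (Subalgebra.zero_mem _)
          rw [he, ← Polynomial.coeff_zero_eq_eval_zero]
          exact hc 0
      | succ i =>
          rw [Polynomial.coeff_X_mul]
          simpa using hG₁coeff i
    · rw [Polynomial.add_comp, Polynomial.C_comp, Polynomial.mul_comp, Polynomial.X_comp,
        ← hG₁, hqq]
      ring

lemma exists_gen : ∃ lam : K, lam ≠ 0 ∧ ∀ i : ℕ, lam ^ i = 1 → (p - 1) ∣ i := by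
  obtain ⟨g, hg⟩ := IsCyclic.exists_generator (α := Kˣ)
  refine ⟨(g : K), Units.ne_zero g, fun i hi => ?_⟩
  have horder : orderOf g = p - 1 := by
    rw [orderOf_eq_card_of_forall_mem_zpowers hg, Nat.card_eq_fintype_card, ZMod.card_units]
  have hgi : g ^ i = 1 := by
    ext
    rw [Units.val_pow_eq_pow_val, hi, Units.val_one]
  rw [← horder]
  exact orderOf_dvd_of_pow_eq_one hgi

lemma expand_contract_of_dvd {R : Type*} [CommSemiring R] {r : ℕ} (hr : 0 < r)
    {G : Polynomial R} (h : ∀ i, ¬ r ∣ i → G.coeff i = 0) :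
    Polynomial.expand R r (G.contract r) = G := by
  ext i
  rw [Polynomial.coeff_expand hr, Polynomial.coeff_contract hr.ne']
  split_ifs with hdvd
  · rw [Nat.div_mul_cancel hdvd]
  · exact (h i hdvd).symm

lemma Tk_eval_of_coeff_supported {κ : Fin n} {s : Set (Fin n)} (hs : κ ∉ s)
    {G : Polynomial S} (hG : ∀ i, G.coeff i ∈ supported K s) (t : S) :
    Tk p n κ (G.eval t) = G.comp (Tk p n κ t) := by
  rw [Polynomial.eval_eq_sum, Polynomial.sum_def, map_sum, Polynomial.comp_eq_sum_left,
    Polynomial.sum_def]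
  refine Finset.sum_congr rfl fun i _ => ?_
  rw [map_mul, map_pow, Tk_supported hs (hG i)]

lemma eval_hGen_cancel {k : ℕ} (hk : k < n) {G H : Polynomial S}
    (hG : ∀ i, G.coeff i ∈ supported K {j : Fin n | j.val < k})
    (hH : ∀ i, H.coeff i ∈ supported K {j : Fin n | j.val < k})
    (heq : G.eval (hGen p n ⟨k, hk⟩) = H.eval (hGen p n ⟨k, hk⟩)) : G = H := by
  have hs : (⟨k, hk⟩ : Fin n) ∉ {j : Fin n | j.val < k} := by simp
  have h1 := congrArg (Tk p n ⟨k, hk⟩) heq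
  rw [Tk_eval_of_coeff_supported hs hG, Tk_eval_of_coeff_supported hs hH,
    Tk_hGen_self] at h1
  have hdeg : 0 < ((f p n k : Polynomial S) ^ (p - 1)).natDegree := by
    rw [Polynomial.natDegree_pow, f_natDegree]
    have hp2 : 2 ≤ p := (Fact.out : p.Prime).two_le
    have hc := card_V_pos (p := p) (n := n) k
    have : 0 < p - 1 := by omega
    exact Nat.mul_pos this hc
  exact comp_right_injective hdeg h1

lemma algHom_eval (φ : S →ₐ[ZMod p] S) (G : Polynomial S) (t : S) :
    φ (G.eval t) = (G.map (φ : S →+* S)).eval (φ t) := by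
  rw [Polynomial.eval_map]
  have h1 : G.eval t = Polynomial.eval₂ (RingHom.id S) t G := rfl
  have h2 := Polynomial.hom_eval₂ (g := (φ : MvPolynomial (Fin n) K →+* MvPolynomial (Fin n) K))
    (f := RingHom.id _) (p := G) t
  rw [RingHom.comp_id] at h2
  rw [h1]
  exact h2

lemma gact_X_mem_supported {g : GL (Fin n) K} (hg : UT p n g) {k : ℕ} {j : Fin n}
    (hj : j.val < k) : gact p n g (X j) ∈ supported K {i : Fin n | i.val < k} := by
  rw [gact_apply_X]
  refine Subalgebra.sum_mem _ fun i _ => ?_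
  by_cases hik : i.val < k
  · exact Subalgebra.mul_mem _
      (by rw [← MvPolynomial.algebraMap_eq]; exact Subalgebra.algebraMap_mem _ _)
      (X_mem_supported.mpr hik)
  · have hji : j < i := by rw [Fin.lt_def]; omega
    rw [hg i j hji, map_zero, zero_mul]
    exact Subalgebra.zero_mem _

lemma gact_supported {g : GL (Fin n) K} (hg : UT p n g) {k : ℕ} {x : S}
    (hx : x ∈ supported K {j : Fin n | j.val < k}) :
    gact p n g x ∈ supported K {j : Fin n | j.val < k} := by
  refine Algebra.adjoin_induction (fun y hy => ?_) (fun r => ?_)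
    (fun a b _ _ ha hb => ?_) (fun a b _ _ ha hb => ?_) hx
  · obtain ⟨j, hj, rfl⟩ := hy
    exact gact_X_mem_supported hg hj
  · rw [AlgHom.commutes]
    exact Subalgebra.algebraMap_mem _ _
  · rw [map_add]; exact Subalgebra.add_mem _ ha hb
  · rw [map_mul]; exact Subalgebra.mul_mem _ ha hb

lemma hGen_mem_supported {k : ℕ} (j : Fin n) (hj : j.val < k) :
    hGen p n j ∈ supported K {i : Fin n | i.val < k} := by
  rw [hGen]
  refine Subalgebra.pow_mem _ ?_ _
  rw [eval_f]
  refine Subalgebra.prod_mem _ fun u hu => ?_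
  refine Subalgebra.sub_mem _ (X_mem_supported.mpr hj) ?_
  refine supported_mono ?_ (V_supported hu)
  intro i hi
  simp only [Set.mem_setOf_eq] at hi ⊢
  omega

lemma aeval_hGen_supported {k : ℕ} {x : S}
    (hx : x ∈ supported K {j : Fin n | j.val < k}) :
    aeval (hGen p n) x ∈ supported K {j : Fin n | j.val < k} := by
  refine Algebra.adjoin_induction (fun y hy => ?_) (fun r => ?_)
    (fun a b _ _ ha hb => ?_) (fun a b _ _ ha hb => ?_) hx
  · obtain ⟨j, hj, rfl⟩ := hy
    rw [aeval_X]
    exact hGen_mem_supported j hj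
  · rw [AlgHom.commutes]
    exact Subalgebra.algebraMap_mem _ _
  · rw [map_add]; exact Subalgebra.add_mem _ ha hb
  · rw [map_mul]; exact Subalgebra.mul_mem _ ha hb


lemma key (k : ℕ) (hk : k ≤ n) :
    ∀ x ∈ supported K {j : Fin n | j.val < k},
      (∀ g : GL (Fin n) K, UT p n g → gact p n g x = x) →
      x ∈ Algebra.adjoin K (hGen p n '' {j : Fin n | j.val < k}) := by
  induction k with
  | zero =>
      intro x hx _
      have hempty : {j : Fin n | j.val < 0} = (∅ : Set (Fin n)) := by ext; simp
      rw [hempty, supported_empty, Algebra.mem_bot] at hx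
      obtain ⟨a, rfl⟩ := hx
      exact Subalgebra.algebraMap_mem _ a
  | succ k ihk =>
      intro x hx hinv
      have hk' : k < n := Nat.lt_of_succ_le hk
      have hkn : k ≤ n := le_of_lt hk'
      set κ : Fin n := ⟨k, hk'⟩ with hκ
      have hc : ∀ i, (Tk p n κ x).coeff i ∈ supported K {j : Fin n | j.val < k} :=
        Tk_coeff_mem hk' hx
      have htrans : ∀ v ∈ V p n k,
          (Tk p n κ x).comp (Polynomial.X + Polynomial.C v) = Tk p n κ x := by
        intro v hv
        obtain ⟨c, rfl⟩ := mem_V.mp hv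
        have hgx := hinv (tunit κ 1 c one_ne_zero) (tunit_UT κ 1 c one_ne_zero)
        have h2 := Tk_gact_tunit κ 1 c one_ne_zero x
        rw [hgx] at h2
        rw [map_one, map_one, one_mul] at h2
        exact h2.symm
      obtain ⟨lam, hl0, hlgen⟩ := exists_gen (p := p)
      have hscale : (Tk p n κ x).comp (Polynomial.C (C lam) * Polynomial.X)
          = Tk p n κ x := by
        have hgx := hinv (tunit κ lam 0 hl0) (tunit_UT κ lam 0 hl0)
        have h2 := Tk_gact_tunit κ lam 0 hl0 x
        rw [hgx] at h2
        have hw0 : (∑ i ∈ Finset.univ.filter (fun i : Fin n => i.val < κ.val),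
            C ((0 : Fin n → K) i) * X i) = 0 := by simp
        rw [hw0, map_zero, add_zero] at h2
        exact h2.symm
      obtain ⟨G, hGc, hqG⟩ := translation_expansion ((Tk p n κ x).natDegree + 1)
        (Tk p n κ x) (Nat.lt_succ_self _) hc htrans
      have hfdeg : 0 < (f p n k : Polynomial S).natDegree := by
        rw [f_natDegree]; exact card_V_pos k
      have hGscale : G.comp (Polynomial.C (C lam) * Polynomial.X) = G := by
        apply comp_right_injective hfdeg
        show (G.comp (Polynomial.C (C lam) * Polynomial.X)).comp (f p n k)
          = G.comp (f p n k)
        calc (G.comp (Polynomial.C (C lam) * Polynomial.X)).comp (f p n k)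
            = G.comp ((Polynomial.C (C lam) * Polynomial.X).comp (f p n k)) :=
              Polynomial.comp_assoc _ _ _
          _ = G.comp (Polynomial.C (C lam) * f p n k) := by
              rw [Polynomial.mul_comp, Polynomial.C_comp, Polynomial.X_comp]
          _ = G.comp ((f p n k).comp (Polynomial.C (C lam) * Polynomial.X)) := by
              rw [f_comp_scale hkn hl0]
          _ = (G.comp (f p n k)).comp (Polynomial.C (C lam) * Polynomial.X) :=
              (Polynomial.comp_assoc _ _ _).symm
          _ = (Tk p n κ x).comp (Polynomial.C (C lam) * Polynomial.X) := by rw [← hqG]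
          _ = Tk p n κ x := hscale
          _ = G.comp (f p n k) := hqG
      have hGcoeff0 : ∀ i, ¬ (p - 1) ∣ i → G.coeff i = 0 := by
        intro i hnd
        have h3 := congrArg (fun t : Polynomial S => t.coeff i) hGscale
        simp only [comp_C_mul_X_coeff] at h3
        have h4 : ((C (lam ^ i) : S) - 1) * G.coeff i = 0 := by
          rw [sub_mul, one_mul, map_pow, h3, sub_self]
        rcases mul_eq_zero.mp h4 with h5 | h5
        · have h7 : (C (lam ^ i) : S) = C 1 := by rw [sub_eq_zero.mp h5, map_one]
          have : lam ^ i = 1 := MvPolynomial.C_injective _ _ h7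
          exact absurd (hlgen i this) hnd
        · exact h5
      have hp1 : 0 < p - 1 := by have := (Fact.out : p.Prime).two_le; omega
      have hexp : Polynomial.expand S (p - 1) (G.contract (p - 1)) = G :=
        expand_contract_of_dvd hp1 hGcoeff0
      set G₂ : Polynomial S := G.contract (p - 1) with hG₂
      have hq2 : Tk p n κ x = G₂.comp ((f p n k) ^ (p - 1)) := by
        rw [hqG, ← hexp, Polynomial.expand_eq_comp_X_pow, Polynomial.comp_assoc,
          Polynomial.X_pow_comp]
      have hb : Polynomial.eval (X κ : S) (Tk p n κ x) = x := by
        rw [← Polynomial.coe_aeval_eq_eval]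
        exact back_Tk κ x
      have hx2 : x = G₂.eval (hGen p n κ) := by
        rw [← hb, hq2, Polynomial.eval_comp, Polynomial.eval_pow, hGen]
      have hG₂c : ∀ i, G₂.coeff i ∈ supported K {j : Fin n | j.val < k} := by
        intro i
        rw [hG₂, Polynomial.coeff_contract hp1.ne']
        exact hGc _
      have hcoefinv : ∀ g : GL (Fin n) K, UT p n g →
          ∀ i, gact p n g (G₂.coeff i) = G₂.coeff i := by
        intro g hg
        have h5 : (G₂.map ((gact p n g : S →ₐ[K] S) : S →+* S)).eval (hGen p n κ)
            = G₂.eval (hGen p n κ) := by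
          have h6 := algHom_eval (gact p n g) G₂ (hGen p n κ)
          rw [gact_hGen hg κ] at h6
          rw [← h6, ← hx2, hinv g hg, hx2]
        have h7 := eval_hGen_cancel hk'
          (fun i => by
            rw [Polynomial.coeff_map]
            exact gact_supported hg (hG₂c i))
          hG₂c h5
        intro i
        have h8 := congrArg (fun t : Polynomial S => t.coeff i) h7
        simpa [Polynomial.coeff_map] using h8
      rw [hx2, Polynomial.eval_eq_sum, Polynomial.sum_def]
      refine Subalgebra.sum_mem _ fun i _ => Subalgebra.mul_mem _ ?_
        (Subalgebra.pow_mem _ ?_ _)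
      · have hmem := ihk hkn (G₂.coeff i) (hG₂c i) (fun g hg => hcoefinv g hg i)
        refine Algebra.adjoin_mono (Set.image_mono ?_) hmem
        intro j hj
        simp only [Set.mem_setOf_eq] at hj ⊢
        omega
      · exact Algebra.subset_adjoin ⟨κ, by simp [hκ], rfl⟩

lemma aind_aux (k : ℕ) (hk : k ≤ n) :
    ∀ P ∈ supported K {j : Fin n | j.val < k}, aeval (hGen p n) P = 0 → P = 0 := by
  induction k with
  | zero =>
      intro P hP h0
      have hempty : {j : Fin n | j.val < 0} = (∅ : Set (Fin n)) := by ext; simp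
      rw [hempty, supported_empty, Algebra.mem_bot] at hP
      obtain ⟨a, rfl⟩ := hP
      rw [AlgHom.commutes] at h0
      rw [show (algebraMap K S) a = C a from rfl] at h0 ⊢
      rw [show (0 : S) = C 0 from (map_zero _).symm] at h0
      rw [MvPolynomial.C_injective _ _ h0]
      exact map_zero _
  | succ k ihk =>
      intro P hP h0
      have hk' : k < n := Nat.lt_of_succ_le hk
      have hkn : k ≤ n := le_of_lt hk'
      set κ : Fin n := ⟨k, hk'⟩ with hκ
      set Q : Polynomial S := Tk p n κ P with hQ
      have hb : Polynomial.eval (X κ : S) Q = P := by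
        rw [← Polynomial.coe_aeval_eq_eval]
        exact back_Tk κ P
      have hQc : ∀ i, Q.coeff i ∈ supported K {j : Fin n | j.val < k} :=
        fun i => Tk_coeff_mem hk' hP i
      have hzero : (Q.map ((aeval (hGen p n) : S →ₐ[K] S) : S →+* S)).eval (hGen p n κ)
          = (0 : Polynomial S).eval (hGen p n κ) := by
        have h6 := algHom_eval (aeval (hGen p n)) Q (X κ)
        rw [hb, aeval_X, h0] at h6
        rw [← h6, Polynomial.eval_zero]
      have h7 := eval_hGen_cancel hk'
        (fun i => by
          rw [Polynomial.coeff_map]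
          exact aeval_hGen_supported (hQc i))
        (fun i => by rw [Polynomial.coeff_zero]; exact Subalgebra.zero_mem _) hzero
      have hQ0 : Q = 0 := by
        refine Polynomial.ext fun i => ?_
        have h8 := congrArg (fun t : Polynomial S => t.coeff i) h7
        simp only [Polynomial.coeff_map, Polynomial.coeff_zero] at h8
        rw [Polynomial.coeff_zero]
        exact ihk hkn (Q.coeff i) (hQc i) h8
      rw [← hb, hQ0, Polynomial.eval_zero]

end Mui

/-- Mui: `h_1, …, h_n` are algebraically independent and generate the algebra
of invariants of the Borel subgroup `B_n` of invertible upper-triangular matrices. -/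
theorem stmt7 (p n : ℕ) [Fact p.Prime] :
    AlgebraicIndependent (ZMod p) (hGen p n) ∧
    ∀ x : MvPolynomial (Fin n) (ZMod p),
      (∀ g : GL (Fin n) (ZMod p),
        (∀ i j : Fin n, j < i → (g : Matrix (Fin n) (Fin n) (ZMod p)) i j = 0) →
          gact p n g x = x) ↔
        x ∈ Algebra.adjoin (ZMod p) (Set.range (hGen p n)) := by
  have huniv : ∀ x : MvPolynomial (Fin n) (ZMod p),
      x ∈ supported (ZMod p) {j : Fin n | j.val < n} := by
    intro x
    have h : {j : Fin n | j.val < n} = Set.univ := by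
      ext j; simp [j.isLt]
    rw [h, supported_univ]
    exact Algebra.mem_top
  constructor
  · rw [algebraicIndependent_iff]
    intro P hP
    exact Mui.aind_aux n le_rfl P (huniv P) hP
  · intro x
    constructor
    · intro hinv
      have hmem := Mui.key n le_rfl x (huniv x) (fun g hg => hinv g hg)
      refine Algebra.adjoin_mono ?_ hmem
      rintro y ⟨j, _, rfl⟩
      exact ⟨j, rfl⟩
    · intro hmem g hg
      refine Algebra.adjoin_induction (fun y hy => ?_) (fun r => ?_)
        (fun a b _ _ ha hb => ?_) (fun a b _ _ ha hb => ?_) hmem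
      · obtain ⟨j, rfl⟩ := hy
        exact Mui.gact_hGen hg j
      · exact AlgHom.commutes _ r
      · rw [map_add, ha, hb]
      · rw [map_mul, ha, hb]
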